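/- Let X be a cycle graph with vertices v₀,…,v_{ℓ−1} and edges e_i = {v_i, v_{(i+1) mod ℓ}}. Let R be an abelian group with subgroups R_{v_i} and R_{e_i} that are all linearly disjoint in R (the summation map from their direct sum to R is injective). Suppose g₀,…,g_{ℓ−1} ∈ R satisfy g_{(i+1) mod ℓ} − g_i ∈ R_{v_i} + R_{v_{(i+1) mod ℓ}} + R_{e_i} for all i. Then there exists h ∈ R such that g_i − h ∈ R_{v_i} for all i. -/

import Mathlib

open Finset

/-- On a cycle of length `ℓ ≥ 3` with linearly disjoint subgroups `Rv i` (at the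
vertices) and `Re i` (at the edges `{vᵢ, vᵢ₊₁}`) of an abelian group `R`: if
`g : Fin ℓ → R` satisfies `g(i+1) − g(i) ∈ Rvᵢ + Rvᵢ₊₁ + Reᵢ` for every `i`
(indices mod `ℓ`), then there exists `h ∈ R` with `g(i) − h ∈ Rvᵢ` for all `i`. -/
theorem stmt17 (R : Type*) [AddCommGroup R] (ℓ : ℕ) [NeZero ℓ] (hℓ : 3 ≤ ℓ)
    (Rv Re : Fin ℓ → AddSubgroup R)
    (hdisj : ∀ (c d : Fin ℓ → R), (∀ i, c i ∈ Rv i) → (∀ i, d i ∈ Re i) →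
      (∑ i, c i) + (∑ i, d i) = 0 → (∀ i, c i = 0) ∧ (∀ i, d i = 0))
    (g : Fin ℓ → R)
    (hg : ∀ i : Fin ℓ, ∃ a ∈ Rv i, ∃ b ∈ Rv (i + 1), ∃ c ∈ Re i,
      g (i + 1) - g i = a + b + c) :
    ∃ h : R, ∀ i, g i - h ∈ Rv i := by
  choose a ha b hb c hc habc using hg
  -- shift sums
  have shift : ∀ f : Fin ℓ → R, ∑ i, f (i + 1) = ∑ i, f i := fun f =>
    Equiv.sum_comp (Equiv.addRight (1 : Fin ℓ)) f
  -- total sum is zero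
  have hsum0 : ∑ i, (g (i + 1) - g i) = 0 := by
    rw [Finset.sum_sub_distrib, shift g, sub_self]
  have hsum : (∑ i, (a i + b (i - 1))) + ∑ i, c i = 0 := by
    have : ∑ i, b (i - 1) = ∑ i, b i :=
      Equiv.sum_comp (Equiv.subRight (1 : Fin ℓ)) b
    calc (∑ i, (a i + b (i - 1))) + ∑ i, c i
        = (∑ i, a i + ∑ i, b i) + ∑ i, c i := by rw [Finset.sum_add_distrib, this]
      _ = ∑ i, (a i + b i + c i) := by rw [Finset.sum_add_distrib, Finset.sum_add_distrib]
      _ = ∑ i, (g (i + 1) - g i) := by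
          refine Finset.sum_congr rfl fun i _ => (habc i).symm
      _ = 0 := hsum0
  have hmem : ∀ i, a i + b (i - 1) ∈ Rv i := by
    intro i
    have := hb (i - 1)
    rw [sub_add_cancel] at this
    exact (Rv i).add_mem (ha i) this
  obtain ⟨hz, hcz⟩ := hdisj _ _ hmem hc hsum
  have hbz : ∀ i, b i = -a (i + 1) := by
    intro i
    have := hz (i + 1)
    rw [add_sub_cancel_right] at this
    exact eq_neg_of_add_eq_zero_right this
  have hstep : ∀ i : Fin ℓ, g (i + 1) + a (i + 1) = g i + a i := by
    intro i
    have := habc i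
    rw [hbz i, hcz i] at this
    have : g (i + 1) - g i = a i - a (i + 1) := by
      rw [this]; abel
    exact (sub_eq_sub_iff_add_eq_add.mp this).trans (add_comm _ _)
  open Fin.NatCast Fin.CommRing in
  have key : ∀ n : ℕ, g (n : Fin ℓ) + a (n : Fin ℓ) = g 0 + a 0 := by
    intro n
    induction n with
    | zero => simp
    | succ n ih =>
      have : ((n + 1 : ℕ) : Fin ℓ) = (n : Fin ℓ) + 1 := by push_cast; ring
      rw [this, hstep]
      exact ih
  refine ⟨g 0 + a 0, fun i => ?_⟩
  have := key (i : ℕ)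
  rw [Fin.cast_val_eq_self] at this
  have h2 : g i - (g 0 + a 0) = -a i := by rw [← this]; abel
  rw [h2]
  exact (Rv i).neg_mem (ha i)
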